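/- Let μ > 0 and let f: [0,∞) → ℝ be given by f(r) = -[ω_μ(r) + (1/2)ω_μ(r)²] with ω_μ(r) = log(8μ²/(μ²+r²)²). Then D¹_μ := 8∫₀^∞ t (t²-1)/(t²+1)³ f(μt) dt = 4 log 8 − 8 − 8 log μ. -/

import Mathlib

noncomputable section
open MeasureTheory Real

/-- `ω_μ(r) = log(8μ²/(μ²+r²)²)`. -/
def omega (μ r : ℝ) : ℝ := Real.log (8 * μ ^ 2 / (μ ^ 2 + r ^ 2) ^ 2)

namespace Statement8Aux

open Filter Set

/-- Antiderivative (as a function of `u = 1 + t²`). -/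
def Fc (c u : ℝ) : ℝ :=
  ((c - 2 * Real.log u) ^ 2 / 4 - (c - 2 * Real.log u) / 2 + 1) / u
    - (c - 2 * Real.log u) ^ 2 / (4 * u ^ 2)

lemma Fc_hasDerivAt (c t : ℝ) :
    HasDerivAt (fun t => Fc c (1 + t ^ 2))
      (t * (t ^ 2 - 1) / (t ^ 2 + 1) ^ 3 *
        (-((c - 2 * Real.log (1 + t ^ 2)) + (1 / 2) * (c - 2 * Real.log (1 + t ^ 2)) ^ 2))) t := by
  have h1 : (0:ℝ) < 1 + t ^ 2 := by positivity
  have hu : HasDerivAt (fun s : ℝ => 1 + s ^ 2) (2 * t) t := by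
    simpa using (hasDerivAt_pow 2 t).const_add 1
  have hw : HasDerivAt (fun s : ℝ => c - 2 * Real.log (1 + s ^ 2))
      (-(2 * (2 * t / (1 + t ^ 2)))) t :=
    ((hu.log h1.ne').const_mul 2).const_sub c
  have hN : HasDerivAt
      (fun s : ℝ => (c - 2 * Real.log (1 + s ^ 2)) ^ 2 / 4
        - (c - 2 * Real.log (1 + s ^ 2)) / 2 + 1)
      (((2:ℕ) * (c - 2 * Real.log (1 + t ^ 2)) ^ 1 * (-(2 * (2 * t / (1 + t ^ 2))))) / 4
        - (-(2 * (2 * t / (1 + t ^ 2)))) / 2) t :=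
    (((hw.pow 2).div_const 4).sub (hw.div_const 2)).add_const 1
  have hM : HasDerivAt (fun s : ℝ => (c - 2 * Real.log (1 + s ^ 2)) ^ 2)
      ((2:ℕ) * (c - 2 * Real.log (1 + t ^ 2)) ^ 1 * (-(2 * (2 * t / (1 + t ^ 2))))) t :=
    hw.pow 2
  have hD : HasDerivAt (fun s : ℝ => 4 * (1 + s ^ 2) ^ 2)
      (4 * ((2:ℕ) * (1 + t ^ 2) ^ 1 * (2 * t))) t := (hu.pow 2).const_mul 4
  have H := (hN.div hu h1.ne').sub (hM.div hD (by positivity))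
  refine H.congr_deriv ?_
  have h2 : (t:ℝ) ^ 2 + 1 ≠ 0 := by positivity
  field_simp
  ring

lemma Fc_tendsto (c : ℝ) :
    Tendsto (fun t : ℝ => Fc c (1 + t ^ 2)) atTop (nhds 0) := by
  have l0 : Tendsto (fun u : ℝ => 1 / u) atTop (nhds 0) := by
    simpa [one_div] using tendsto_inv_atTop_zero
  have l1 : Tendsto (fun u : ℝ => Real.log u / u) atTop (nhds 0) := by
    simpa using Real.tendsto_pow_log_div_mul_add_atTop 1 0 1 one_ne_zero
  have l2 : Tendsto (fun u : ℝ => Real.log u ^ 2 / u) atTop (nhds 0) := by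
    simpa using Real.tendsto_pow_log_div_mul_add_atTop 1 0 2 one_ne_zero
  have comb : Tendsto (fun u : ℝ =>
      (c ^ 2 / 4 - c / 2 + 1) * (1 / u) + (1 - c) * (Real.log u / u) + Real.log u ^ 2 / u
        - c ^ 2 / 4 * ((1 / u) * (1 / u)) + c * ((Real.log u / u) * (1 / u))
        - (Real.log u / u) * (Real.log u / u)) atTop (nhds 0) := by
    have := (((((l0.const_mul (c ^ 2 / 4 - c / 2 + 1)).add (l1.const_mul (1 - c))).add
      l2).sub ((l0.mul l0).const_mul (c ^ 2 / 4))).add ((l1.mul l0).const_mul c)).sub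
      (l1.mul l1)
    simpa using this
  have hGG : Tendsto (fun u : ℝ => Fc c u) atTop (nhds 0) := by
    apply comb.congr'
    filter_upwards [eventually_gt_atTop (0:ℝ)] with u hu
    unfold Fc
    field_simp
    ring
  have hcomp : Tendsto (fun t : ℝ => 1 + t ^ 2) atTop atTop :=
    tendsto_atTop_add_const_left _ _ (tendsto_pow_atTop two_ne_zero)
  exact hGG.comp hcomp

lemma Fc_cont (c : ℝ) : Continuous (fun t : ℝ => Fc c (1 + t ^ 2)) := by
  have h1 : ∀ t : ℝ, (0:ℝ) < 1 + t ^ 2 := fun t => by positivity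
  have hu : Continuous (fun t : ℝ => 1 + t ^ 2) :=
    continuous_const.add (continuous_pow 2)
  have hw : Continuous (fun t : ℝ => c - 2 * Real.log (1 + t ^ 2)) :=
    continuous_const.sub (continuous_const.mul (hu.log fun t => (h1 t).ne'))
  unfold Fc
  exact ((((hw.pow 2).div_const 4).sub (hw.div_const 2)).add continuous_const).div hu
      (fun t => (h1 t).ne') |>.sub
    ((hw.pow 2).div (continuous_const.mul (hu.pow 2)) fun t => by positivity)

lemma cont_main (c : ℝ) : Continuous (fun t : ℝ =>
    t * (t ^ 2 - 1) / (t ^ 2 + 1) ^ 3 *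
      (-((c - 2 * Real.log (1 + t ^ 2)) + (1 / 2) * (c - 2 * Real.log (1 + t ^ 2)) ^ 2))) := by
  have h1 : ∀ t : ℝ, (0:ℝ) < 1 + t ^ 2 := fun t => by positivity
  have hu : Continuous (fun t : ℝ => 1 + t ^ 2) :=
    continuous_const.add (continuous_pow 2)
  have hw : Continuous (fun t : ℝ => c - 2 * Real.log (1 + t ^ 2)) :=
    continuous_const.sub (continuous_const.mul (hu.log fun t => (h1 t).ne'))
  exact ((continuous_id.mul ((continuous_pow 2).sub continuous_const)).div
      (((continuous_pow 2).add continuous_const).pow 3) (fun t => by simp only [Pi.pow_apply, Pi.add_apply]; positivity)).mul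
    (hw.add (continuous_const.mul (hw.pow 2))).neg

lemma tail_bound (c : ℝ) {t : ℝ} (ht : 1 < t) :
    ‖t * (t ^ 2 - 1) / (t ^ 2 + 1) ^ 3 *
      (-((c - 2 * Real.log (1 + t ^ 2)) + (1 / 2) * (c - 2 * Real.log (1 + t ^ 2)) ^ 2))‖
    ≤ ‖((|c| + 18) + (|c| + 18) ^ 2 / 2) * t ^ ((-5 : ℝ)/2)‖ := by
  have ht0 : (0:ℝ) < t := lt_trans one_pos ht
  have ht1 : (1:ℝ) ≤ t := ht.le
  set L := Real.log (1 + t ^ 2) with hL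
  set w := c - 2 * L with hw
  have hL0 : 0 ≤ L := Real.log_nonneg (by nlinarith)
  have hq1 : (1:ℝ) ≤ t ^ ((1:ℝ)/4) := Real.one_le_rpow ht1 (by norm_num)
  have hlogt : Real.log t ≤ 4 * t ^ ((1:ℝ)/4) := by
    have h := Real.log_le_rpow_div ht0.le (show (0:ℝ) < 1/4 by norm_num)
    calc Real.log t ≤ t ^ ((1:ℝ)/4) / (1/4) := h
      _ = 4 * t ^ ((1:ℝ)/4) := by ring
  have hL9 : L ≤ 9 * t ^ ((1:ℝ)/4) := by
    have h2t : (1:ℝ) + t ^ 2 ≤ 2 * t ^ 2 := by nlinarith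
    have h3 := Real.log_le_log (by positivity) h2t
    rw [Real.log_mul two_ne_zero (by positivity), Real.log_pow] at h3
    have hlog2 : Real.log 2 ≤ 1 := by
      have := Real.log_le_sub_one_of_pos (show (0:ℝ) < 2 by norm_num); linarith
    push_cast at h3
    nlinarith
  set a := |c| + 18 with ha
  have ha0 : (0:ℝ) < a := by have := abs_nonneg c; simp only [ha]; linarith
  have hwabs : |w| ≤ a * t ^ ((1:ℝ)/4) := by
    have h4 : |w| ≤ |c| + 2 * L := by
      rw [hw]
      calc |c - 2*L| ≤ |c| + |2*L| := abs_sub _ _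
        _ = |c| + 2*L := by rw [abs_of_nonneg (by linarith : (0:ℝ) ≤ 2*L)]
    calc |w| ≤ |c| + 2 * L := h4
      _ ≤ |c| * t ^ ((1:ℝ)/4) + 18 * t ^ ((1:ℝ)/4) := by
          nlinarith [abs_nonneg c]
      _ = a * t ^ ((1:ℝ)/4) := by rw [ha]; ring
  have hq12 : t ^ ((1:ℝ)/4) ≤ t ^ ((1:ℝ)/2) :=
    Real.rpow_le_rpow_of_exponent_le ht1 (by norm_num)
  have hq2 : (0:ℝ) < t ^ ((1:ℝ)/2) := Real.rpow_pos_of_pos ht0 _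
  have hsq : (t ^ ((1:ℝ)/4)) ^ 2 = t ^ ((1:ℝ)/2) := by
    rw [← Real.rpow_natCast (t ^ ((1:ℝ)/4)) 2, ← Real.rpow_mul ht0.le]
    norm_num
  have hfbound : |(-(w + (1/2) * w ^ 2))| ≤ (a + a ^ 2 / 2) * t ^ ((1:ℝ)/2) := by
    have h5 : |(-(w + (1/2) * w ^ 2))| ≤ |w| + (1/2) * w ^ 2 := by
      rw [abs_neg]
      calc |w + (1/2)*w^2| ≤ |w| + |(1/2)*w^2| := abs_add_le _ _
        _ = |w| + (1/2)*w^2 := by rw [abs_of_nonneg (by positivity : (0:ℝ) ≤ (1/2)*w^2)]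
    have h6 : w ^ 2 ≤ a ^ 2 * t ^ ((1:ℝ)/2) := by
      have hws : w ^ 2 = |w| ^ 2 := (sq_abs w).symm
      rw [hws, ← hsq]
      calc |w| ^ 2 ≤ (a * t ^ ((1:ℝ)/4)) ^ 2 := by
            apply pow_le_pow_left₀ (abs_nonneg w) hwabs
        _ = a ^ 2 * (t ^ ((1:ℝ)/4)) ^ 2 := by ring
    calc |(-(w + (1/2) * w ^ 2))| ≤ |w| + (1/2) * w ^ 2 := h5
      _ ≤ a * t ^ ((1:ℝ)/2) + (1/2) * (a ^ 2 * t ^ ((1:ℝ)/2)) := by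
          have : a * t ^ ((1:ℝ)/4) ≤ a * t ^ ((1:ℝ)/2) :=
            mul_le_mul_of_nonneg_left hq12 ha0.le
          nlinarith [hwabs]
      _ = (a + a ^ 2 / 2) * t ^ ((1:ℝ)/2) := by ring
  have hgbound : |t * (t ^ 2 - 1) / (t ^ 2 + 1) ^ 3| ≤ t ^ ((-3 : ℝ)) := by
    have hnum : (0:ℝ) ≤ t * (t ^ 2 - 1) := by nlinarith
    have h7 : t * (t ^ 2 - 1) / (t ^ 2 + 1) ^ 3 ≤ t ^ 3 / (t ^ 2) ^ 3 := by
      apply div_le_div₀ (by positivity) (by nlinarith) (by positivity) (by nlinarith)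
    have h8 : t ^ 3 / (t ^ 2) ^ 3 = t ^ ((-3:ℝ)) := by
      have h9 : t ^ ((-3:ℝ)) = (t ^ 3)⁻¹ := by
        rw [← Real.rpow_natCast t 3, ← Real.rpow_neg ht0.le]
        norm_num
      rw [h9]
      rw [div_eq_iff (by positivity : ((t:ℝ) ^ 2) ^ 3 ≠ 0)]
      field_simp
    rw [abs_of_nonneg (by positivity)]
    linarith [h7, h8.le, h8.ge]
  have hrpow : t ^ ((-3:ℝ)) * t ^ ((1:ℝ)/2) = t ^ ((-5:ℝ)/2) := by
    rw [← Real.rpow_add ht0]; norm_num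
  rw [Real.norm_eq_abs, Real.norm_eq_abs, abs_mul,
    abs_of_nonneg (by positivity : (0:ℝ) ≤ (a + a^2/2) * t ^ ((-5:ℝ)/2))]
  calc |t * (t ^ 2 - 1) / (t ^ 2 + 1) ^ 3| * |(-(w + (1/2) * w ^ 2))|
      ≤ t ^ ((-3:ℝ)) * ((a + a ^ 2 / 2) * t ^ ((1:ℝ)/2)) := by
        apply mul_le_mul hgbound hfbound (abs_nonneg _) (by positivity)
    _ = (a + a ^ 2 / 2) * t ^ ((-5:ℝ)/2) := by rw [← hrpow]; ring

lemma integrable_main (c : ℝ) : IntegrableOn (fun t : ℝ =>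
    t * (t ^ 2 - 1) / (t ^ 2 + 1) ^ 3 *
      (-((c - 2 * Real.log (1 + t ^ 2)) + (1 / 2) * (c - 2 * Real.log (1 + t ^ 2)) ^ 2)))
    (Set.Ioi 0) := by
  have hcont := cont_main c
  rw [show Set.Ioi (0:ℝ) = Set.Ioc 0 1 ∪ Set.Ioi 1 from
    (Set.Ioc_union_Ioi_eq_Ioi zero_le_one).symm]
  apply IntegrableOn.union
  · exact hcont.integrableOn_Ioc
  · have hb : IntegrableOn (fun t : ℝ =>
        ((|c| + 18) + (|c| + 18) ^ 2 / 2) * t ^ ((-5 : ℝ)/2)) (Set.Ioi 1) :=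
      (integrableOn_Ioi_rpow_of_lt (by norm_num) one_pos).const_mul _
    apply Integrable.mono hb (hcont.aestronglyMeasurable.restrict)
    filter_upwards [ae_restrict_mem measurableSet_Ioi] with t ht
    exact tail_bound c ht

end Statement8Aux

/-- With `f(r) = -[ω_μ(r) + (1/2)ω_μ(r)²]`, one has
`D¹_μ = 8∫₀^∞ t (t²-1)/(t²+1)³ f(μt) dt = 4 log 8 − 8 − 8 log μ`. -/
theorem statement8 (μ : ℝ) (hμ : 0 < μ) :
    8 * (∫ t in Set.Ioi (0:ℝ),
        t * (t ^ 2 - 1) / (t ^ 2 + 1) ^ 3 *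
          (-(omega μ (μ * t) + (1 / 2) * (omega μ (μ * t)) ^ 2)))
      = 4 * Real.log 8 - 8 - 8 * Real.log μ := by
  set c : ℝ := Real.log 8 - 2 * Real.log μ with hc
  have homega : ∀ t : ℝ, omega μ (μ * t) = c - 2 * Real.log (1 + t ^ 2) := by
    intro t
    have h1 : (0:ℝ) < 1 + t ^ 2 := by positivity
    have h2 : μ ^ 2 + (μ * t) ^ 2 = μ ^ 2 * (1 + t ^ 2) := by ring
    unfold omega
    rw [h2, mul_pow, Real.log_div (by positivity) (by positivity),
      Real.log_mul (by norm_num) (by positivity),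
      Real.log_mul (by positivity) (by positivity),
      Real.log_pow, Real.log_pow, Real.log_pow, Real.log_pow, hc]
    push_cast
    ring
  have hint := MeasureTheory.integral_Ioi_of_hasDerivAt_of_tendsto
    (f := fun t => Statement8Aux.Fc c (1 + t ^ 2))
    (f' := fun t : ℝ => t * (t ^ 2 - 1) / (t ^ 2 + 1) ^ 3 *
      (-((c - 2 * Real.log (1 + t ^ 2)) + (1 / 2) * (c - 2 * Real.log (1 + t ^ 2)) ^ 2)))
    (a := 0) (m := 0)
    ((Statement8Aux.Fc_cont c).continuousWithinAt)
    (fun x _ => Statement8Aux.Fc_hasDerivAt c x)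
    (Statement8Aux.integrable_main c)
    (Statement8Aux.Fc_tendsto c)
  have hF0 : Statement8Aux.Fc c (1 + (0:ℝ) ^ 2) = 1 - c / 2 := by
    unfold Statement8Aux.Fc
    norm_num
    ring
  have hint2 : (∫ t in Set.Ioi (0:ℝ), t * (t ^ 2 - 1) / (t ^ 2 + 1) ^ 3 *
      (-((c - 2 * Real.log (1 + t ^ 2)) + (1 / 2) * (c - 2 * Real.log (1 + t ^ 2)) ^ 2)))
      = 0 - (1 - c / 2) := by
    rw [← hF0]; exact hint
  simp only [homega]
  rw [hint2, hc]
  ring
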